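/- (Convergence of stationary points of the relaxation under CPLD) Let {t_k} ↓ 0 and let w^k be a KKT point of the relaxed problem WDP(t_k): min F₀(w) s.t. G₀(w) ≤ t_k, G_i(w) ≤ 0 (i = 1,…,N_g), H_j(w) = 0 (j = 1,…,N_h), where additionally at each w^k there exist KKT multipliers (λ₀^k, λ^k, μ^k) such that the gradients {∇G_i(w^k) : λ_i^k > 0, 0 ≤ i ≤ N_g} ∪ {∇H_j(w^k) : μ_j^k ≠ 0} are linearly independent. If w^k → w̄ and the limiting problem (with t = 0) satisfies CPLD at w̄, then the multiplier sequence {(λ₀^k, λ^k, μ^k)} is bounded and w̄ is a KKT point of the limiting problem min F₀ s.t. G₀ ≤ 0, G_i ≤ 0, H_j = 0. -/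

import Mathlib

open scoped BigOperators
open Filter Topology

/-- Positive-linear dependence of constraint gradients indexed by `I₀`, `J₀`. -/
def PosLinDepAt {N l r : ℕ}
    (G : Fin l → (Fin N → ℝ) → ℝ) (H : Fin r → (Fin N → ℝ) → ℝ)
    (I0 : Finset (Fin l)) (J0 : Finset (Fin r)) (w : Fin N → ℝ) : Prop :=
  ∃ (α : Fin l → ℝ) (β : Fin r → ℝ),
    (∀ i, 0 ≤ α i) ∧ (∀ i ∉ I0, α i = 0) ∧ (∀ j ∉ J0, β j = 0) ∧
    (α ≠ 0 ∨ β ≠ 0) ∧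
    (∑ i, α i • fderiv ℝ (G i) w) + (∑ j, β j • fderiv ℝ (H j) w) = 0

/-- Linear dependence of constraint gradients indexed by `I₀`, `J₀`. -/
def LinDepAt {N l r : ℕ}
    (G : Fin l → (Fin N → ℝ) → ℝ) (H : Fin r → (Fin N → ℝ) → ℝ)
    (I0 : Finset (Fin l)) (J0 : Finset (Fin r)) (w : Fin N → ℝ) : Prop :=
  ∃ (α : Fin l → ℝ) (β : Fin r → ℝ),
    (∀ i ∉ I0, α i = 0) ∧ (∀ j ∉ J0, β j = 0) ∧
    (α ≠ 0 ∨ β ≠ 0) ∧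
    (∑ i, α i • fderiv ℝ (G i) w) + (∑ j, β j • fderiv ℝ (H j) w) = 0

/-- The constant positive linear dependence condition (CPLD) at `w`. -/
def CPLDAt {N l r : ℕ}
    (G : Fin l → (Fin N → ℝ) → ℝ) (H : Fin r → (Fin N → ℝ) → ℝ)
    (w : Fin N → ℝ) : Prop :=
  ∀ (I0 : Finset (Fin l)) (J0 : Finset (Fin r)),
    (∀ i ∈ I0, G i w = 0) →
    PosLinDepAt G H I0 J0 w →
    ∃ U ∈ nhds w, ∀ w' ∈ U, LinDepAt G H I0 J0 w'

/-- Auxiliary: convergence of the stationarity expression along a sequence. -/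
lemma tendsto_statsum {N Ng Nh : ℕ}
    (F0 : (Fin N → ℝ) → ℝ)
    (G : Fin (Ng + 1) → (Fin N → ℝ) → ℝ)
    (H : Fin Nh → (Fin N → ℝ) → ℝ)
    (hF0 : ContDiff ℝ 1 F0)
    (hG : ∀ i, ContDiff ℝ 1 (G i)) (hH : ∀ j, ContDiff ℝ 1 (H j))
    (v : ℕ → Fin N → ℝ) (wbar : Fin N → ℝ)
    (hv : Filter.Tendsto v Filter.atTop (nhds wbar))
    (c : ℕ → ℝ) (l : ℕ → Fin (Ng + 1) → ℝ) (m : ℕ → Fin Nh → ℝ)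
    (ci : ℝ) (li : Fin (Ng + 1) → ℝ) (mi : Fin Nh → ℝ)
    (hc : Tendsto c atTop (nhds ci))
    (hl : ∀ i, Tendsto (fun k => l k i) atTop (nhds (li i)))
    (hm : ∀ j, Tendsto (fun k => m k j) atTop (nhds (mi j))) :
    Tendsto (fun k => c k • fderiv ℝ F0 (v k) +
        (∑ i, l k i • fderiv ℝ (G i) (v k)) +
        (∑ j, m k j • fderiv ℝ (H j) (v k))) atTop
      (nhds (ci • fderiv ℝ F0 wbar +
        (∑ i, li i • fderiv ℝ (G i) wbar) +
        (∑ j, mi j • fderiv ℝ (H j) wbar))) := by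
  have hF : Tendsto (fun k => fderiv ℝ F0 (v k)) atTop (nhds (fderiv ℝ F0 wbar)) :=
    ((hF0.continuous_fderiv one_ne_zero).tendsto wbar).comp hv
  have hGf : ∀ i, Tendsto (fun k => fderiv ℝ (G i) (v k)) atTop (nhds (fderiv ℝ (G i) wbar)) :=
    fun i => (((hG i).continuous_fderiv one_ne_zero).tendsto wbar).comp hv
  have hHf : ∀ j, Tendsto (fun k => fderiv ℝ (H j) (v k)) atTop (nhds (fderiv ℝ (H j) wbar)) :=
    fun j => (((hH j).continuous_fderiv one_ne_zero).tendsto wbar).comp hv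
  exact ((hc.smul hF).add (tendsto_finset_sum _ fun i _ => (hl i).smul (hGf i))).add
    (tendsto_finset_sum _ fun j _ => (hm j).smul (hHf j))

theorem relaxation_kkt_limit_under_cpld
    {N Ng Nh : ℕ}
    (F0 : (Fin N → ℝ) → ℝ)
    (G : Fin (Ng + 1) → (Fin N → ℝ) → ℝ)
    (H : Fin Nh → (Fin N → ℝ) → ℝ)
    (hF0 : ContDiff ℝ 1 F0)
    (hG : ∀ i, ContDiff ℝ 1 (G i)) (hH : ∀ j, ContDiff ℝ 1 (H j))
    (t : ℕ → ℝ) (htpos : ∀ k, 0 < t k) (htanti : StrictAnti t)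
    (ht0 : Filter.Tendsto t Filter.atTop (nhds 0))
    (w : ℕ → Fin N → ℝ)
    (lam : ℕ → Fin (Ng + 1) → ℝ) (mu : ℕ → Fin Nh → ℝ)
    -- feasibility of w^k for WDP(t_k)
    (hfeas : ∀ k, G 0 (w k) ≤ t k ∧ (∀ i, i ≠ 0 → G i (w k) ≤ 0) ∧
      (∀ j, H j (w k) = 0))
    -- KKT conditions at w^k with multipliers (λ₀^k, λ^k, μ^k)
    (hstat : ∀ k, fderiv ℝ F0 (w k) +
      (∑ i, lam k i • fderiv ℝ (G i) (w k)) +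
      (∑ j, mu k j • fderiv ℝ (H j) (w k)) = 0)
    (hlampos : ∀ k i, 0 ≤ lam k i)
    (hcomp0 : ∀ k, lam k 0 * (G 0 (w k) - t k) = 0)
    (hcomp : ∀ k, ∀ i, i ≠ 0 → lam k i * G i (w k) = 0)
    -- the gradients supported on the positive multipliers are linearly
    -- independent (Lemma A.1 of Steffensen–Ulbrich)
    (hli : ∀ k, ∀ (c : Fin (Ng + 1) → ℝ) (d : Fin Nh → ℝ),
      (∀ i, c i ≠ 0 → 0 < lam k i) → (∀ j, d j ≠ 0 → mu k j ≠ 0) →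
      (∑ i, c i • fderiv ℝ (G i) (w k)) + (∑ j, d j • fderiv ℝ (H j) (w k)) = 0 →
      c = 0 ∧ d = 0)
    (wbar : Fin N → ℝ)
    (hconv : Filter.Tendsto w Filter.atTop (nhds wbar))
    -- CPLD holds for the limiting problem at w̄
    (hcpld : CPLDAt G H wbar) :
    -- the multiplier sequence is bounded
    Bornology.IsBounded (Set.range fun k => (lam k, mu k)) ∧
    -- w̄ is a KKT point of the limiting problem
    ((∀ i, G i wbar ≤ 0) ∧ (∀ j, H j wbar = 0) ∧
      ∃ (lamb : Fin (Ng + 1) → ℝ) (mub : Fin Nh → ℝ),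
        fderiv ℝ F0 wbar +
          (∑ i, lamb i • fderiv ℝ (G i) wbar) +
          (∑ j, mub j • fderiv ℝ (H j) wbar) = 0 ∧
        (∀ i, 0 ≤ lamb i) ∧ (∀ i, lamb i * G i wbar = 0)) := by
  classical
  have hGc : ∀ i, Continuous (G i) := fun i => (hG i).continuous
  have hHc : ∀ j, Continuous (H j) := fun j => (hH j).continuous
  have hGseq : ∀ i, Tendsto (fun k => G i (w k)) atTop (nhds (G i wbar)) :=
    fun i => ((hGc i).tendsto wbar).comp hconv
  have hHseq : ∀ j, Tendsto (fun k => H j (w k)) atTop (nhds (H j wbar)) :=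
    fun j => ((hHc j).tendsto wbar).comp hconv
  -- feasibility of the limit
  have hGbar : ∀ i, G i wbar ≤ 0 := by
    intro i
    by_cases hi : i = 0
    · subst hi
      exact le_of_tendsto_of_tendsto (hGseq 0) ht0
        (Eventually.of_forall fun k => (hfeas k).1)
    · exact le_of_tendsto (hGseq i) (Eventually.of_forall fun k => (hfeas k).2.1 i hi)
  have hHbar : ∀ j, H j wbar = 0 := by
    intro j
    have h2 : Tendsto (fun k => H j (w k)) atTop (nhds 0) :=
      tendsto_const_nhds.congr fun k => ((hfeas k).2.2 j).symm
    exact tendsto_nhds_unique (hHseq j) h2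
  -- boundedness of the multipliers
  set p : ℕ → (Fin (Ng + 1) → ℝ) × (Fin Nh → ℝ) := fun k => (lam k, mu k) with hpdef
  have key : ∃ C, ∀ k, ‖p k‖ ≤ C := by
    by_contra hub
    push_neg at hub
    have hfreq : ∀ n : ℕ, ∃ᶠ k in atTop, (n : ℝ) < ‖p k‖ := by
      intro n
      rw [Filter.frequently_atTop]
      intro a
      obtain ⟨k, hk⟩ := hub (max (n : ℝ) (∑ k' ∈ Finset.range a, ‖p k'‖))
      refine ⟨k, ?_, lt_of_le_of_lt (le_max_left _ _) hk⟩
      by_contra hka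
      push_neg at hka
      have hle : ‖p k‖ ≤ ∑ k' ∈ Finset.range a, ‖p k'‖ :=
        Finset.single_le_sum (fun _ _ => norm_nonneg _) (Finset.mem_range.mpr hka)
      exact absurd hk (not_lt.mpr (hle.trans (le_max_right _ _)))
    obtain ⟨φ₁, hφ₁, hφ₁n⟩ := Filter.extraction_forall_of_frequently hfreq
    have hrpos1 : ∀ n, 0 < ‖p (φ₁ n)‖ :=
      fun n => lt_of_le_of_lt (Nat.cast_nonneg n) (hφ₁n n)
    have husph : ∀ n, ‖p (φ₁ n)‖⁻¹ • p (φ₁ n) ∈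
        Metric.sphere (0 : (Fin (Ng + 1) → ℝ) × (Fin Nh → ℝ)) 1 := by
      intro n
      rw [mem_sphere_zero_iff_norm, norm_smul, norm_inv, norm_norm]
      exact inv_mul_cancel₀ (ne_of_gt (hrpos1 n))
    obtain ⟨q, hqsph, φ₂, hφ₂, hq⟩ := (isCompact_sphere 0 1).tendsto_subseq husph
    set σ : ℕ → ℕ := φ₁ ∘ φ₂ with hσdef
    have hσ : StrictMono σ := hφ₁.comp hφ₂
    set r : ℕ → ℝ := fun m => ‖p (σ m)‖ with hrdef
    have hrpos : ∀ m, 0 < r m := fun m => hrpos1 (φ₂ m)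
    have hrtop : Tendsto r atTop atTop := by
      refine tendsto_atTop_mono (fun m => ?_) tendsto_natCast_atTop_atTop
      calc (m : ℝ) ≤ (φ₂ m : ℝ) := Nat.cast_le.mpr (hφ₂.le_apply)
        _ ≤ r m := (hφ₁n (φ₂ m)).le
    have hrinv : Tendsto (fun m => (r m)⁻¹) atTop (nhds 0) :=
      tendsto_inv_atTop_zero.comp hrtop
    have hwσ : Tendsto (w ∘ σ) atTop (nhds wbar) := hconv.comp hσ.tendsto_atTop
    have htσ : Tendsto (t ∘ σ) atTop (nhds 0) := ht0.comp hσ.tendsto_atTop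
    have hq' : Tendsto (fun m => (r m)⁻¹ • p (σ m)) atTop (nhds q) := hq
    have hlamlim : ∀ i, Tendsto (fun m => (r m)⁻¹ * lam (σ m) i) atTop (nhds (q.1 i)) := by
      intro i
      have h1 : Tendsto (fun m => ((r m)⁻¹ • p (σ m)).1 i) atTop (nhds (q.1 i)) :=
        (((continuous_apply i).comp continuous_fst).tendsto q).comp hq'
      refine h1.congr fun m => ?_
      simp [hpdef, Prod.smul_fst, Pi.smul_apply, smul_eq_mul]
    have hmulim : ∀ j, Tendsto (fun m => (r m)⁻¹ * mu (σ m) j) atTop (nhds (q.2 j)) := by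
      intro j
      have h1 : Tendsto (fun m => ((r m)⁻¹ • p (σ m)).2 j) atTop (nhds (q.2 j)) :=
        (((continuous_apply j).comp continuous_snd).tendsto q).comp hq'
      refine h1.congr fun m => ?_
      simp [hpdef, Prod.smul_snd, Pi.smul_apply, smul_eq_mul]
    have hαnn : ∀ i, 0 ≤ q.1 i := fun i =>
      ge_of_tendsto (hlamlim i) (Eventually.of_forall fun m =>
        mul_nonneg (inv_nonneg.mpr (hrpos m).le) (hlampos _ i))
    -- limit of scaled stationarity
    have hstat2 : ∀ m, ((r m)⁻¹ • fderiv ℝ F0 ((w ∘ σ) m) +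
        (∑ i, ((r m)⁻¹ * lam (σ m) i) • fderiv ℝ (G i) ((w ∘ σ) m)) +
        (∑ j, ((r m)⁻¹ * mu (σ m) j) • fderiv ℝ (H j) ((w ∘ σ) m))) = 0 := by
      intro m
      have h := hstat (σ m)
      have : ((r m)⁻¹ • fderiv ℝ F0 (w (σ m)) +
          (∑ i, ((r m)⁻¹ * lam (σ m) i) • fderiv ℝ (G i) (w (σ m))) +
          (∑ j, ((r m)⁻¹ * mu (σ m) j) • fderiv ℝ (H j) (w (σ m)))) =
          (r m)⁻¹ • (fderiv ℝ F0 (w (σ m)) +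
          (∑ i, lam (σ m) i • fderiv ℝ (G i) (w (σ m))) +
          (∑ j, mu (σ m) j • fderiv ℝ (H j) (w (σ m)))) := by
        simp [smul_add, Finset.smul_sum, smul_smul]
      rw [show (w ∘ σ) m = w (σ m) from rfl, this, h, smul_zero]
    have hlim := tendsto_statsum F0 G H hF0 hG hH (w ∘ σ) wbar hwσ
      (fun m => (r m)⁻¹) (fun m => fun i => (r m)⁻¹ * lam (σ m) i)
      (fun m => fun j => (r m)⁻¹ * mu (σ m) j) 0 q.1 q.2 hrinv hlamlim hmulim
    have hzero : Tendsto (fun m => (r m)⁻¹ • fderiv ℝ F0 ((w ∘ σ) m) +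
        (∑ i, ((r m)⁻¹ * lam (σ m) i) • fderiv ℝ (G i) ((w ∘ σ) m)) +
        (∑ j, ((r m)⁻¹ * mu (σ m) j) • fderiv ℝ (H j) ((w ∘ σ) m))) atTop
        (nhds 0) := tendsto_const_nhds.congr fun m => (hstat2 m).symm
    have heq0 := tendsto_nhds_unique hlim hzero
    have hsum : (∑ i, q.1 i • fderiv ℝ (G i) wbar) +
        (∑ j, q.2 j • fderiv ℝ (H j) wbar) = 0 := by
      simpa using heq0
    -- active index sets
    set I0 : Finset (Fin (Ng + 1)) := Finset.univ.filter (fun i => q.1 i ≠ 0) with hI0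
    set J0 : Finset (Fin Nh) := Finset.univ.filter (fun j => q.2 j ≠ 0) with hJ0
    have hI0mem : ∀ i, i ∈ I0 ↔ q.1 i ≠ 0 := fun i => by simp [hI0]
    have hJ0mem : ∀ j, j ∈ J0 ↔ q.2 j ≠ 0 := fun j => by simp [hJ0]
    have hevlam : ∀ i ∈ I0, ∀ᶠ m in atTop, 0 < lam (σ m) i := by
      intro i hi
      have hαi : 0 < q.1 i := lt_of_le_of_ne (hαnn i) (Ne.symm ((hI0mem i).mp hi))
      have hev := (hlamlim i).eventually (eventually_gt_nhds hαi)
      filter_upwards [hev] with m hm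
      have hne : lam (σ m) i ≠ 0 := by
        intro h0
        rw [h0, mul_zero] at hm
        exact lt_irrefl 0 hm
      exact lt_of_le_of_ne (hlampos _ i) (Ne.symm hne)
    have hevmu : ∀ j ∈ J0, ∀ᶠ m in atTop, mu (σ m) j ≠ 0 := by
      intro j hj
      have hβj : q.2 j ≠ 0 := (hJ0mem j).mp hj
      have hev := (hmulim j).eventually (isOpen_ne.eventually_mem hβj)
      filter_upwards [hev] with m hm
      exact right_ne_zero_of_mul hm
    -- activity of I0 at wbar
    have hact : ∀ i ∈ I0, G i wbar = 0 := by
      intro i hi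
      by_cases h0 : i = 0
      · subst h0
        have hev : ∀ᶠ m in atTop, G 0 (w (σ m)) - t (σ m) = 0 := by
          filter_upwards [hevlam 0 hi] with m hm
          rcases mul_eq_zero.mp (hcomp0 (σ m)) with h | h
          · exact absurd h (ne_of_gt hm)
          · exact h
        have h1 : Tendsto (fun m => G 0 (w (σ m)) - t (σ m)) atTop
            (nhds (G 0 wbar - 0)) := ((hGseq 0).comp hσ.tendsto_atTop).sub htσ
        have h2 := tendsto_nhds_unique h1
          (tendsto_const_nhds.congr' (hev.mono fun m hm => hm.symm))
        linarith
      · have hev : ∀ᶠ m in atTop, G i (w (σ m)) = 0 := by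
          filter_upwards [hevlam i hi] with m hm
          rcases mul_eq_zero.mp (hcomp (σ m) i h0) with h | h
          · exact absurd h (ne_of_gt hm)
          · exact h
        exact tendsto_nhds_unique ((hGseq i).comp hσ.tendsto_atTop)
          (tendsto_const_nhds.congr' (hev.mono fun m hm => hm.symm))
    -- nondegeneracy
    have hqne : q.1 ≠ 0 ∨ q.2 ≠ 0 := by
      by_contra hcon
      push_neg at hcon
      have hq0 : q = 0 := Prod.ext hcon.1 hcon.2
      have := mem_sphere_zero_iff_norm.mp hqsph
      rw [hq0, norm_zero] at this
      norm_num at this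
    -- apply CPLD
    have hpld : PosLinDepAt G H I0 J0 wbar :=
      ⟨q.1, q.2, hαnn, fun i hi => not_not.mp (fun h => hi ((hI0mem i).mpr h)),
        fun j hj => not_not.mp (fun h => hj ((hJ0mem j).mpr h)), hqne, hsum⟩
    obtain ⟨U, hU, hUdep⟩ := hcpld I0 J0 hact hpld
    have hevU : ∀ᶠ m in atTop, (w ∘ σ) m ∈ U := hwσ.eventually_mem hU
    have hall1 : ∀ᶠ m in atTop, ∀ i ∈ I0, 0 < lam (σ m) i :=
      (Filter.eventually_all_finset I0).mpr hevlam
    have hall2 : ∀ᶠ m in atTop, ∀ j ∈ J0, mu (σ m) j ≠ 0 :=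
      (Filter.eventually_all_finset J0).mpr hevmu
    obtain ⟨m, hmU, hm1, hm2⟩ := (hevU.and (hall1.and hall2)).exists
    obtain ⟨a, b, hsa, hsb, hab, hcomb⟩ := hUdep ((w ∘ σ) m) hmU
    obtain ⟨ha0, hb0⟩ := hli (σ m) a b
      (fun i hi => hm1 i (by by_contra hmem; exact hi (hsa i hmem)))
      (fun j hj => hm2 j (by by_contra hmem; exact hj (hsb j hmem))) hcomb
    rcases hab with h | h
    · exact h ha0
    · exact h hb0
  obtain ⟨C, hC⟩ := key
  have hbdd : Bornology.IsBounded (Set.range fun k => (lam k, mu k)) := by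
    rw [isBounded_iff_forall_norm_le]
    exact ⟨C, by rintro x ⟨k, rfl⟩; exact hC k⟩
  refine ⟨hbdd, hGbar, hHbar, ?_⟩
  -- extract convergent subsequence of multipliers
  have hmem : ∀ k, p k ∈ Metric.closedBall (0 : (Fin (Ng + 1) → ℝ) × (Fin Nh → ℝ)) C :=
    fun k => by simpa [Metric.mem_closedBall, dist_zero_right] using hC k
  obtain ⟨qb, _, φ, hφ, hqb⟩ := (isCompact_closedBall 0 C).tendsto_subseq hmem
  have hwφ : Tendsto (w ∘ φ) atTop (nhds wbar) := hconv.comp hφ.tendsto_atTop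
  have htφ : Tendsto (t ∘ φ) atTop (nhds 0) := ht0.comp hφ.tendsto_atTop
  have hlamφ : ∀ i, Tendsto (fun n => lam (φ n) i) atTop (nhds (qb.1 i)) := by
    intro i
    exact ((((continuous_apply i).comp continuous_fst).tendsto qb).comp hqb).congr
      fun n => rfl
  have hmuφ : ∀ j, Tendsto (fun n => mu (φ n) j) atTop (nhds (qb.2 j)) := by
    intro j
    exact ((((continuous_apply j).comp continuous_snd).tendsto qb).comp hqb).congr
      fun n => rfl
  refine ⟨qb.1, qb.2, ?_, ?_, ?_⟩
  · have hlim := tendsto_statsum F0 G H hF0 hG hH (w ∘ φ) wbar hwφ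
      (fun _ => (1 : ℝ)) (fun n => lam (φ n)) (fun n => mu (φ n)) 1 qb.1 qb.2
      tendsto_const_nhds hlamφ hmuφ
    have hzero : Tendsto (fun n => (1 : ℝ) • fderiv ℝ F0 ((w ∘ φ) n) +
        (∑ i, lam (φ n) i • fderiv ℝ (G i) ((w ∘ φ) n)) +
        (∑ j, mu (φ n) j • fderiv ℝ (H j) ((w ∘ φ) n))) atTop (nhds 0) :=
      tendsto_const_nhds.congr fun n => by
        simp only [one_smul]; exact (hstat (φ n)).symm
    have := tendsto_nhds_unique hlim hzero
    simpa using this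
  · exact fun i => ge_of_tendsto (hlamφ i) (Eventually.of_forall fun n => hlampos _ i)
  · intro i
    by_cases h0 : i = 0
    · subst h0
      have h1 : Tendsto (fun n => lam (φ n) 0 * (G 0 (w (φ n)) - t (φ n))) atTop
          (nhds (qb.1 0 * (G 0 wbar - 0))) :=
        (hlamφ 0).mul (((hGseq 0).comp hφ.tendsto_atTop).sub htφ)
      have h2 := tendsto_nhds_unique h1
        (tendsto_const_nhds.congr fun n => (hcomp0 (φ n)).symm)
      simpa using h2
    · have h1 : Tendsto (fun n => lam (φ n) i * G i (w (φ n))) atTop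
          (nhds (qb.1 i * G i wbar)) :=
        (hlamφ i).mul ((hGseq i).comp hφ.tendsto_atTop)
      exact tendsto_nhds_unique h1
        (tendsto_const_nhds.congr fun n => (hcomp (φ n) i h0).symm)
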